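/- Let G be a directed graph consisting of a directed cycle C₁ with vertices labeled 1,2,...,L in cyclic arc order, together with outer paths (paths starting and ending on C₁ with internal vertices off C₁). Remove vertex 1. Then the remaining graph contains a directed cycle if and only if there exists an outer path from some vertex b ∈ V(C₁)\{1} to some vertex c ∈ V(C₁)\{1} with b ≥ c (in the cyclic labeling). -/

import Mathlib

/-- The cyclically-consecutive pairs of a list. -/
def cyclicPairs {V : Type} (c : List V) : List (V × V) := c.zip (c.rotate 1)

/-- `d` is (the vertex list of) a directed cycle of the graph `A`. -/
def IsCycleList {V : Type} (A : V → V → Prop) (d : List V) : Prop :=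
  d ≠ [] ∧ d.Nodup ∧ ∀ pr ∈ cyclicPairs d, A pr.1 pr.2

/-- `p` is an outer path of the graph `A` relative to the cycle with vertex set `C`
and arc relation `carc`: a directed path of length ≥ 1 from `u ∈ C` to `w ∈ C`
whose internal vertices are off `C` and whose arcs are not arcs of the cycle. -/
def OuterPath {V : Type} (A : V → V → Prop) (C : Set V) (carc : V → V → Prop)
    (p : List V) (u w : V) : Prop :=
  2 ≤ p.length ∧ p.head? = some u ∧ p.getLast? = some w ∧ u ∈ C ∧ w ∈ C ∧
    List.Chain' A p ∧ (∀ v ∈ p, v ≠ u → v ≠ w → v ∉ C) ∧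
    ∀ pr ∈ p.zip p.tail, ¬ carc pr.1 pr.2

namespace Prop6Aux

variable {V : Type}

lemma chain'_iff_pairs (A : V → V → Prop) : ∀ (l : List V),
    List.Chain' A l ↔ ∀ pr ∈ l.zip l.tail, A pr.1 pr.2
  | [] => by simp [List.Chain', List.isChain_nil]
  | [a] => by simp [List.Chain', List.isChain_singleton]
  | a :: b :: t => by
    rw [show List.Chain' A (a :: b :: t) ↔ A a b ∧ List.Chain' A (b :: t) from
      List.isChain_cons_cons, chain'_iff_pairs A (b :: t)]
    constructor
    · rintro ⟨hab, h⟩ pr hpr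
      rw [List.tail_cons, List.zip_cons_cons] at hpr
      rcases List.mem_cons.1 hpr with rfl | hpr
      · exact hab
      · exact h pr hpr
    · intro h
      refine ⟨h (a, b) ?_, fun pr hpr => h pr ?_⟩
      · rw [List.tail_cons, List.zip_cons_cons]; exact List.mem_cons_self
      · rw [List.tail_cons, List.zip_cons_cons]; exact List.mem_cons_of_mem _ hpr

lemma zip_extend {α β : Type} : ∀ (l : List α) (m : List β) (extra : List α),
    m.length ≤ l.length → (l ++ extra).zip m = l.zip m
  | _, [], _, _ => by simp
  | [], _ :: _, _, h => by simp at h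
  | a :: l, b :: m, extra, h => by
    simp only [List.cons_append, List.zip_cons_cons]
    rw [zip_extend l m extra (by simpa using h)]

lemma cyclicPairs_cons (x : V) (s : List V) :
    cyclicPairs (x :: s) = ((x :: s) ++ [x]).zip (s ++ [x]) := by
  rw [cyclicPairs, show (x :: s).rotate 1 = s ++ [x] by
    rw [List.rotate_cons_succ, List.rotate_zero],
    zip_extend (x :: s) (s ++ [x]) [x] (by simp)]

lemma cyclicPairs_rotate (d : List V) (n : ℕ) :
    cyclicPairs (d.rotate n) = (cyclicPairs d).rotate n := by
  unfold cyclicPairs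
  rw [List.rotate_rotate, Nat.add_comm n 1, ← List.rotate_rotate]
  exact (List.zipWith_rotate_distrib Prod.mk d (d.rotate 1) n (by simp)).symm

lemma isCycleList_rotate {A : V → V → Prop} {d : List V} (h : IsCycleList A d) (n : ℕ) :
    IsCycleList A (d.rotate n) := by
  obtain ⟨h1, h2, h3⟩ := h
  refine ⟨by simpa using h1, List.nodup_rotate.2 h2, ?_⟩
  intro pr hpr
  rw [cyclicPairs_rotate] at hpr
  exact h3 pr (List.mem_rotate.1 hpr)

lemma first_in (P : V → Prop) : ∀ (l : List V), (∃ v ∈ l, P v) →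
    ∃ pre v suf, l = pre ++ v :: suf ∧ P v ∧ ∀ u ∈ pre, ¬ P u
  | [], h => by simp at h
  | a :: t, h => by
    by_cases ha : P a
    · exact ⟨[], a, t, rfl, ha, by simp⟩
    · obtain ⟨v, hv, hPv⟩ := h
      rcases List.mem_cons.1 hv with rfl | hv
      · exact absurd hPv ha
      obtain ⟨pre, v', suf, hsp, h1, h2⟩ := first_in P t ⟨v, hv, hPv⟩
      refine ⟨a :: pre, v', suf, by rw [hsp]; rfl, h1, ?_⟩
      intro u hu
      rcases List.mem_cons.1 hu with rfl | hu
      · exact ha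
      · exact h2 u hu

lemma exists_dup_split : ∀ (l : List V), ¬ l.Nodup →
    ∃ (y : V) (l₁ l₂ l₃ : List V), l = l₁ ++ y :: l₂ ++ y :: l₃
  | [], h => absurd List.nodup_nil h
  | a :: t, h => by
    by_cases ha : a ∈ t
    · obtain ⟨l₂, l₃, rfl⟩ := List.append_of_mem ha
      exact ⟨a, [], l₂, l₃, rfl⟩
    · have ht : ¬ t.Nodup := fun ht => h (List.nodup_cons.2 ⟨ha, ht⟩)
      obtain ⟨y, l₁, l₂, l₃, rfl⟩ := exists_dup_split t ht
      exact ⟨y, a :: l₁, l₂, l₃, rfl⟩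

lemma pair_mem_zip_tail : ∀ (l : List V) (pr : V × V), pr ∈ l.zip l.tail →
    pr.1 ∈ l.dropLast ∧ pr.2 ∈ l.tail
  | [], pr, h => by simp at h
  | [a], pr, h => by simp at h
  | a :: b :: t, pr, h => by
    rw [List.tail_cons, List.zip_cons_cons] at h
    rcases List.mem_cons.1 h with rfl | h
    · exact ⟨by simp, by simp⟩
    · obtain ⟨h1, h2⟩ := pair_mem_zip_tail (b :: t) pr h
      exact ⟨by rw [List.dropLast_cons₂]; exact List.mem_cons_of_mem _ h1,
        List.mem_cons_of_mem _ h2⟩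

lemma extract_cycle (A : V → V → Prop) : ∀ (n : ℕ) (w : List V), w.length ≤ n →
    List.Chain' A w → 2 ≤ w.length → w.head? = w.getLast? →
    ∃ d, IsCycleList A d ∧ ∀ v ∈ d, v ∈ w := by
  intro n
  induction n with
  | zero => intro w h1 _ h2 _; omega
  | succ n ih =>
    intro w hn hch hlen hcl
    cases w with
    | nil => simp at hlen
    | cons x t =>
      have ht : t ≠ [] := by cases t <;> simp_all
      have hlastx : (x :: t).getLast? = some x := by
        rw [← hcl]; rfl
      have hgl : t.getLast ht = x := by
        have h1 : (x :: t).getLast? = some ((x :: t).getLast (by simp)) :=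
          List.getLast?_eq_getLast _
        rw [hlastx] at h1
        have h2 : (x :: t).getLast (by simp) = t.getLast ht := List.getLast_cons ht
        rw [h2] at h1
        exact (Option.some.inj h1).symm
      have hts : t = t.dropLast ++ [x] := by
        conv_lhs => rw [← List.dropLast_append_getLast ht]
        rw [hgl]
      set s := t.dropLast with hs
      by_cases hnd : (x :: s).Nodup
      · refine ⟨x :: s, ⟨by simp, hnd, ?_⟩, ?_⟩
        · intro pr hpr
          rw [cyclicPairs_cons] at hpr
          have hw : (x :: t).tail = s ++ [x] := by rw [List.tail_cons, hts]
          have := (chain'_iff_pairs A (x :: t)).1 hch pr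
          apply this
          rw [hw, show (x :: t) = (x :: s) ++ [x] by rw [List.cons_append, ← hts]]
          exact hpr
        · intro v hv
          rcases List.mem_cons.1 hv with rfl | hv
          · exact List.mem_cons_self
          · exact List.mem_cons_of_mem _ (hts ▸ List.mem_append_left _ hv)
      · obtain ⟨y, l₁, l₂, l₃, hsplit⟩ := exists_dup_split _ hnd
        have hwsplit : x :: t = l₁ ++ (y :: l₂ ++ [y]) ++ (l₃ ++ [x]) := by
          rw [show x :: t = (x :: s) ++ [x] by rw [List.cons_append, ← hts], hsplit]
          simp
        have hinf : (y :: l₂ ++ [y]) <:+: (x :: t) := ⟨l₁, l₃ ++ [x], by rw [hwsplit]⟩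
        have hlen' : (y :: l₂ ++ [y]).length ≤ n := by
          have h1 := congrArg List.length hwsplit
          simp only [List.length_cons, List.length_append] at h1 ⊢
          simp only [List.length_cons, List.length_append] at hn
          omega
        have hg : (y :: l₂ ++ [y]).getLast? = some y := by
          rw [show y :: l₂ ++ [y] = (y :: l₂) ++ [y] from rfl]
          exact List.getLast?_concat
        obtain ⟨d, hd, hdm⟩ := ih (y :: l₂ ++ [y]) hlen' (hch.infix hinf)
          (by simp) (by rw [hg]; rfl)
        exact ⟨d, hd, fun v hv => hinf.subset (hdm v hv)⟩

lemma seg_lemma {L : ℕ} [NeZero L] (A : V → V → Prop) (hL : 2 ≤ L)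
    (c : Fin L → V) (hc : Function.Injective c)
    (noBack : ¬ ∃ (b e : Fin L) (p : List V), b ≠ 0 ∧ e ≠ 0 ∧ e ≤ b ∧
      OuterPath A (Set.range c) (fun a' b' => ∃ i : Fin L, a' = c i ∧ b' = c (i + 1))
        p (c b) (c e)) :
    ∀ (n : ℕ) (w : List V), w.length ≤ n → List.Chain' A w → 2 ≤ w.length →
      (∀ v ∈ w, v ≠ c 0) → ∀ i j : Fin L, w.head? = some (c i) → w.getLast? = some (c j) →
      (i : ℕ) < (j : ℕ) := by
  intro n
  induction n with
  | zero => intro w h1 _ h2; omega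
  | succ n ih =>
    intro w hn hch hlen h0 i j hhead hlast
    cases w with
    | nil => simp at hhead
    | cons v0 rest =>
      have hv0 : v0 = c i := by simpa using hhead
      subst hv0
      have hrest : rest ≠ [] := by cases rest <;> simp_all
      have hjrest : rest.getLast? = some (c j) := by
        cases rest with
        | nil => exact absurd rfl hrest
        | cons a t => rw [← hlast]; exact List.getLast?_cons_cons.symm
      have hcj_mem : c j ∈ rest := by
        have := List.mem_of_mem_getLast? (l := rest) (by rw [hjrest]; rfl)
        exact this
      obtain ⟨pre, v, suf, hsplit, hvC, hpre⟩ :=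
        first_in (· ∈ Set.range c) rest ⟨c j, hcj_mem, ⟨j, rfl⟩⟩
      obtain ⟨m, rfl⟩ := hvC
      subst hsplit
      have hi0 : i ≠ 0 := by
        intro h; exact h0 (c i) (List.mem_cons_self) (by rw [h])
      have hm0 : m ≠ 0 := by
        intro h
        exact h0 (c m) (List.mem_cons_of_mem _ (List.mem_append_right _
          (List.mem_cons_self))) (by rw [h])
      -- key step : i.val < m.val
      have him : (i : ℕ) < (m : ℕ) := by
        by_cases hcase : pre = [] ∧ ∃ k : Fin L, c i = c k ∧ c m = c (k + 1)
        · obtain ⟨hpre0, k, hik, hmk⟩ := hcase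
          have hk : k = i := (hc hik).symm
          subst hk
          have hm : m = k + 1 := hc hmk
          have hv1 : ((1 : Fin L) : ℕ) = 1 := by
            simp [Fin.val_one', Nat.mod_eq_of_lt (by omega : 1 < L)]
          have hval : ((k + 1 : Fin L) : ℕ) = ((k : ℕ) + 1) % L := by
            rw [Fin.add_def, hv1]
          by_cases hkL : (k : ℕ) + 1 = L
          · exfalso
            apply hm0
            apply Fin.ext
            rw [hm, hval, hkL, Nat.mod_self]
            simp
          · have : ((k + 1 : Fin L) : ℕ) = (k : ℕ) + 1 := by
              rw [hval, Nat.mod_eq_of_lt (by have := k.isLt; omega)]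
            rw [hm, this]
            omega
        · -- the segment is an outer path
          by_contra hnot
          have hmi : m ≤ i := by rw [Fin.le_def]; omega
          apply noBack
          refine ⟨i, m, c i :: pre ++ [c m], hi0, hm0, hmi, ?_, ?_, ?_, ⟨i, rfl⟩,
            ⟨m, rfl⟩, ?_, ?_, ?_⟩
          · simp
          · rfl
          · rw [show c i :: pre ++ [c m] = (c i :: pre) ++ [c m] from rfl,
              List.getLast?_concat]
          · exact hch.prefix ⟨suf, by simp⟩
          · intro v hv hvi hvm
            rcases List.mem_cons.1 hv with rfl | hv
            · exact absurd rfl hvi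
            · rcases List.mem_append.1 hv with hv | hv
              · exact hpre v hv
              · rcases List.mem_singleton.1 hv with rfl
                exact absurd rfl hvm
          · -- arcs are not cycle arcs
            cases pre with
            | nil =>
              intro pr hpr
              simp at hpr
              subst hpr
              rintro ⟨k, h1, h2⟩
              exact hcase ⟨rfl, k, h1, h2⟩
            | cons q pre' =>
              intro pr hpr
              simp only [List.cons_append, List.tail_cons, List.zip_cons_cons,
                List.mem_cons] at hpr
              rcases hpr with rfl | hpr
              · rintro ⟨k, _, h2⟩
                exact hpre q (List.mem_cons_self) ⟨k + 1, h2.symm⟩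
              · have h1 := (pair_mem_zip_tail (q :: (pre' ++ [c m])) pr hpr).1
                rw [show q :: (pre' ++ [c m]) = (q :: pre') ++ [c m] from rfl,
                  List.dropLast_concat] at h1
                rintro ⟨k, hk1, _⟩
                exact hpre pr.1 h1 ⟨k, hk1.symm⟩
      -- now finish by recursion or directly
      cases suf with
      | nil =>
        have : (c i :: (pre ++ [c m])).getLast? = some (c m) := by
          rw [show c i :: (pre ++ [c m]) = (c i :: pre) ++ [c m] from rfl,
            List.getLast?_concat]
        rw [this] at hlast
        have : c m = c j := Option.some.inj hlast
        rw [← hc this]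
        exact him
      | cons a suf' =>
        have hmj : (m : ℕ) < (j : ℕ) := by
          apply ih (c m :: a :: suf')
          · simp only [List.length_cons, List.length_append] at hn ⊢
            omega
          · exact hch.suffix ⟨c i :: pre, by simp⟩
          · simp
          · intro v hv
            apply h0
            rcases List.mem_cons.1 hv with rfl | hv
            · exact List.mem_cons_of_mem _ (List.mem_append_right _
                (List.mem_cons_self))
            · exact List.mem_cons_of_mem _ (List.mem_append_right _
                (List.mem_cons_of_mem _ hv))
          · rfl
          · rw [← hlast]
            exact (List.getLast?_append_of_ne_nil (c i :: pre)
              (l₂ := c m :: a :: suf') (by simp)).symm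
        omega

end Prop6Aux

open Prop6Aux in
/-- Proposition 6: let `G` consist of a directed cycle `c 0 → c 1 → ⋯ → c (L-1) → c 0`
together with outer paths (every arc is a cycle arc or lies on an outer path), with
no cycle vertex-disjoint from `C₁`.  After removing vertex `c 0`, the remaining graph
contains a directed cycle iff there is an outer path from `c b` to `c e` with
`b, e ≠ 0` and `e ≤ b`. -/
theorem remove_vertex_cycle_iff_backward_outer_path {V : Type} [Fintype V]
    (A : V → V → Prop) (L : ℕ) [NeZero L] (hL : 2 ≤ L)
    (c : Fin L → V) (hc : Function.Injective c)
    (hcyc : ∀ i : Fin L, A (c i) (c (i + 1)))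
    (hstruct : ∀ a b : V, A a b →
      (∃ i : Fin L, a = c i ∧ b = c (i + 1)) ∨
      ∃ (p : List V) (u w : V),
        OuterPath A (Set.range c) (fun a' b' => ∃ i : Fin L, a' = c i ∧ b' = c (i + 1))
          p u w ∧ (a, b) ∈ p.zip p.tail)
    (hnodisj : ∀ d : List V, IsCycleList A d → ∃ i : Fin L, c i ∈ d) :
    (∃ d : List V, IsCycleList A d ∧ c 0 ∉ d) ↔
    (∃ (b e : Fin L) (p : List V), b ≠ 0 ∧ e ≠ 0 ∧ e ≤ b ∧
      OuterPath A (Set.range c) (fun a' b' => ∃ i : Fin L, a' = c i ∧ b' = c (i + 1))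
        p (c b) (c e)) := by
  constructor
  · rintro ⟨d, hd, hd0⟩
    by_contra hGoal
    obtain ⟨i, hi⟩ := hnodisj d hd
    obtain ⟨l₁, l₂, rfl⟩ := List.append_of_mem hi
    have hd' : (l₁ ++ c i :: l₂).rotate l₁.length = c i :: (l₂ ++ l₁) := by
      rw [List.rotate_eq_drop_append_take (by simp), List.drop_left, List.take_left]
      rfl
    have hcyc' := isCycleList_rotate hd l₁.length
    rw [hd'] at hcyc'
    set w : List V := (c i :: (l₂ ++ l₁)) ++ [c i] with hw
    have hchw : List.Chain' A w := by
      apply (chain'_iff_pairs A w).2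
      intro pr hpr
      apply hcyc'.2.2
      rw [cyclicPairs_cons]
      exact hpr
    have hi0 : i ≠ 0 := by
      intro h
      exact hd0 (h ▸ hi)
    have h0w : ∀ v ∈ w, v ≠ c 0 := by
      intro v hv hveq
      subst hveq
      apply hd0
      rcases List.mem_append.1 hv with hv | hv
      · rcases List.mem_cons.1 hv with hv | hv
        · rw [hv]; exact hi
        · rcases List.mem_append.1 hv with hv | hv
          · exact List.mem_append_right _ (List.mem_cons_of_mem _ hv)
          · exact List.mem_append_left _ hv
      · rw [List.mem_singleton.1 hv]; exact hi
    have := seg_lemma A hL c hc hGoal w.length w le_rfl hchw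
      (by simp only [hw, List.length_append, List.length_cons]; omega) h0w i i
      rfl (by rw [hw]; exact List.getLast?_concat)
    omega
  · rintro ⟨b, e, p, hb, he, heb, hP⟩
    obtain ⟨hlen, hhead, hlastp, _, _, hchain, hint, harcs⟩ := hP
    have heb' : (e : ℕ) ≤ (b : ℕ) := heb
    have walk : ∀ k : ℕ, (hk : (e : ℕ) + k < L) → ∃ w : List V, List.Chain' A w ∧
        w.head? = some (c b) ∧ w.getLast? = some (c ⟨(e : ℕ) + k, hk⟩) ∧ 2 ≤ w.length ∧
        ∀ v ∈ w, v ∈ p ∨ ∃ m : Fin L, v = c m ∧ (e : ℕ) ≤ (m : ℕ) ∧ (m : ℕ) ≤ (e : ℕ) + k := by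
      intro k
      induction k with
      | zero =>
        intro hk
        have : (⟨(e : ℕ) + 0, hk⟩ : Fin L) = e := Fin.ext (by simp)
        rw [this]
        exact ⟨p, hchain, hhead, hlastp, hlen, fun v hv => Or.inl hv⟩
      | succ k ihk =>
        intro hk
        obtain ⟨w, hw1, hw2, hw3, hw4, hw5⟩ := ihk (by omega)
        have hstep : (⟨(e : ℕ) + k, by omega⟩ : Fin L) + 1 = ⟨(e : ℕ) + (k + 1), hk⟩ := by
          apply Fin.ext
          rw [Fin.add_def]
          have hv1 : ((1 : Fin L) : ℕ) = 1 := by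
            simp [Fin.val_one', Nat.mod_eq_of_lt (by omega : 1 < L)]
          rw [hv1]
          show ((e : ℕ) + k + 1) % L = (e : ℕ) + (k + 1)
          rw [Nat.mod_eq_of_lt (by omega)]
          omega
        refine ⟨w ++ [c ⟨(e : ℕ) + (k + 1), hk⟩], ?_, ?_, ?_, ?_, ?_⟩
        · apply hw1.append (List.isChain_singleton _)
          intro x hx y hy
          rw [hw3] at hx
          rcases Option.mem_some_iff.1 hx with rfl
          rcases Option.mem_some_iff.1 (by simpa using hy) with rfl
          have := hcyc ⟨(e : ℕ) + k, by omega⟩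
          rwa [hstep] at this
        · rw [List.head?_append_of_ne_nil _ (by
            intro h; rw [h] at hw4; simp at hw4)]
          exact hw2
        · exact List.getLast?_concat
        · simp only [List.length_append]
          omega
        · intro v hv
          rcases List.mem_append.1 hv with hv | hv
          · rcases hw5 v hv with hv | ⟨m, rfl, h1, h2⟩
            · exact Or.inl hv
            · exact Or.inr ⟨m, rfl, h1, by omega⟩
          · rcases List.mem_singleton.1 hv with rfl
            exact Or.inr ⟨_, rfl, by simp, by simp⟩
    have hbL : (e : ℕ) + ((b : ℕ) - (e : ℕ)) < L := by
      have := b.isLt; omega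
    obtain ⟨w, hw1, hw2, hw3, hw4, hw5⟩ := walk ((b : ℕ) - (e : ℕ)) hbL
    have hbfin : (⟨(e : ℕ) + ((b : ℕ) - (e : ℕ)), hbL⟩ : Fin L) = b :=
      Fin.ext (by simp; omega)
    rw [hbfin] at hw3
    obtain ⟨d, hd, hdw⟩ := extract_cycle A w.length w le_rfl hw1 hw4
      (by rw [hw2, hw3])
    refine ⟨d, hd, ?_⟩
    intro h
    rcases hw5 (c 0) (hdw _ h) with h | ⟨m, hm, h1, _⟩
    · have hne_b : c 0 ≠ c b := fun hh => hb (hc hh).symm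
      have hne_e : c 0 ≠ c e := fun hh => he (hc hh).symm
      exact hint (c 0) h hne_b hne_e ⟨0, rfl⟩
    · have : m = 0 := (hc hm.symm)
      subst this
      simp only [Fin.val_zero] at h1
      have : (e : ℕ) = 0 := by omega
      exact he (Fin.ext (by simp [this]))
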